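/- Let B be the simple graph on vertex set {1,2,...,7} with edge set {12,14,15,17,23,24,25,26,27,34,35,45,46,47,67} (writing uv for the edge between u and v). Then a 2-coloring c of the vertices of B with c(1) = gray is a legal 2-coloring of B if and only if its gray class is exactly {1,3,5,6,7} (and hence its white class is {2,4}). In particular, assuming vertex 1 is gray, B has a unique legal 2-coloring. -/

import Mathlib

open SimpleGraph in
instance decAdjSdiffAux {V : Type*} [DecidableEq V] (G : SimpleGraph V) [DecidableRel G.Adj]
    (e : Sym2 V) : DecidableRel (G \ fromEdgeSet {e}).Adj := fun a b =>
  decidable_of_iff (G.Adj a b ∧ ¬ s(a,b) = e) (by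
    simp only [sdiff_adj, fromEdgeSet_adj, Set.mem_singleton_iff, not_and]
    constructor
    · rintro ⟨h, hne⟩; exact ⟨h, fun he => absurd he hne⟩
    · rintro ⟨h, hne⟩; exact ⟨h, fun he => (hne he) h.ne⟩)

open SimpleGraph in
instance decAcyclicAux {V : Type*} [DecidableEq V] [Fintype V] (G : SimpleGraph V)
    [DecidableRel G.Adj] : Decidable G.IsAcyclic :=
  decidable_of_iff (∀ v w, G.Adj v w → ¬(G \ fromEdgeSet {s(v,w)}).Reachable v w) (by
    rw [isAcyclic_iff_forall_adj_isBridge]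
    simp only [isBridge_iff]
    exact ⟨fun h v w hvw => h v w hvw, fun h v w hvw => h hvw⟩)

/-- A set `U` of vertices of a simple graph `G` induces a linear forest:
the induced subgraph is acyclic and every vertex of `U` has at most 2 neighbors in `U`. -/
def InducesLinearForest {V : Type*} (G : SimpleGraph V) (U : Set V) : Prop :=
  (G.induce U).IsAcyclic ∧ ∀ v ∈ U, {w | w ∈ U ∧ G.Adj v w}.ncard ≤ 2

instance decILFAux {V : Type*} [DecidableEq V] [Fintype V] (G : SimpleGraph V)
    [DecidableRel G.Adj] (U : Set V) [DecidablePred (· ∈ U)] :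
    Decidable (InducesLinearForest G U) := by
  unfold InducesLinearForest
  have h : ∀ v : V, ({w | w ∈ U ∧ G.Adj v w}).ncard = ({w | w ∈ U ∧ G.Adj v w}).toFinset.card :=
    fun v => Set.ncard_eq_toFinset_card' _
  refine decidable_of_iff ((∀ v ∈ U, ({w | w ∈ U ∧ G.Adj v w}).toFinset.card ≤ 2)
    ∧ (G.induce U).IsAcyclic) ?_
  simp_rw [h, and_comm]

/-- A legal 2-coloring of `G` (`true` = gray, `false` = white): each color class
induces a linear forest. -/
def IsLegal2Coloring {V : Type*} (G : SimpleGraph V) (c : V → Bool) : Prop :=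
  InducesLinearForest G {v | c v = true} ∧ InducesLinearForest G {v | c v = false}

instance decLegalAux {V : Type*} [DecidableEq V] [Fintype V] (G : SimpleGraph V)
    [DecidableRel G.Adj] (c : V → Bool) : Decidable (IsLegal2Coloring G c) := by
  unfold IsLegal2Coloring; infer_instance

/-- Vertex set {1, …, 7}. -/
abbrev VB : Type := {m : ℕ // m ∈ Finset.Icc 1 7}

/-- The edge set of the basic building block `B`. -/
def BEdges : Set (ℕ × ℕ) :=
  {(1,2),(1,4),(1,5),(1,7),(2,3),(2,4),(2,5),(2,6),(2,7),
   (3,4),(3,5),(4,5),(4,6),(4,7),(6,7)}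

/-- The basic building block `B` on vertex set {1, …, 7}. -/
def BGraph : SimpleGraph VB :=
  SimpleGraph.fromRel (fun u v => (u.val, v.val) ∈ BEdges)

instance : DecidablePred (· ∈ BEdges) := fun p =>
  decidable_of_iff (p ∈ [(1,2),(1,4),(1,5),(1,7),(2,3),(2,4),(2,5),(2,6),(2,7),
   (3,4),(3,5),(4,5),(4,6),(4,7),(6,7)]) (by simp [BEdges])

instance : DecidableRel BGraph.Adj := fun a b =>
  decidable_of_iff (a ≠ b ∧ ((a.val,b.val) ∈ BEdges ∨ (b.val,a.val) ∈ BEdges))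
    (by rw [BGraph]; rfl)

set_option maxHeartbeats 16000000 in
set_option maxRecDepth 100000 in
/-- A 2-coloring `c` of `B` with `c 1 = gray` is a legal 2-coloring of `B` iff
its gray class is exactly {1,3,5,6,7}. -/
theorem stmt0 (c : VB → Bool) (h1 : c ⟨1, by decide⟩ = true) :
    IsLegal2Coloring BGraph c ↔
      {v : VB | c v = true} = {v : VB | v.val ∈ ({1,3,5,6,7} : Set ℕ)} := by
  rw [Set.ext_iff]
  have h2 : ∀ v : VB, (v ∈ {v : VB | c v = true} ↔ v ∈ {v : VB | v.val ∈ ({1,3,5,6,7} : Set ℕ)})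
      ↔ (c v = decide (v.val ∈ [1,3,5,6,7])) := by
    intro v
    simp only [Set.mem_setOf_eq, Set.mem_insert_iff, Set.mem_singleton_iff,
      List.mem_cons, List.not_mem_nil, or_false, decide_eq_true_eq]
    cases hcv : c v <;> simp
  simp_rw [h2]
  revert h1
  revert c
  decide
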